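/- Let P and Q be probability distributions on a finite set and suppose Q is the Bayes-optimal law; then combining the two bounds: E_P[ℓ(X, X̂_Q^ε(Z))] − E_P[ℓ(X, X̂_P(Z))] ≤ Λ_max · K_Π · ‖P_Z − Q_Z‖_1 + C_Λ · ε, where X̂_Q^ε is the ε-randomized Bayes filter X̂_Q^ε(z)[x̂] = Pr(B(Q_{X|z} + U) = x̂) with U uniform on the L2 ε-ball, K_Π = Σ_i ‖Π_i^{-1}‖_2, and C_Λ = max_{a,b} ‖λ_a − λ_b‖_2. -/

import Mathlib

open Finset MeasureTheory

/-- Bayes response to loss matrix `Λ` and vector `V`: the minimizer of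
`xh ↦ ∑ x, Λ x xh * V x`, ties resolved by lowest index. -/
noncomputable def bayesResponse {M : ℕ} [NeZero M]
    (Λ : Fin M → Fin M → ℝ) (V : Fin M → ℝ) : Fin M := by
  classical
  exact if h : (Finset.univ.filter fun a : Fin M =>
      ∀ b, (∑ x, Λ x a * V x) ≤ ∑ x, Λ x b * V x).Nonempty
    then (Finset.univ.filter fun a : Fin M =>
      ∀ b, (∑ x, Λ x a * V x) ≤ ∑ x, Λ x b * V x).min' h
    else 0

section Aux
variable {M : ℕ} [NeZero M]

lemma bayes_filter_nonempty (Λ : Fin M → Fin M → ℝ) (V : Fin M → ℝ) :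
    (Finset.univ.filter fun a : Fin M =>
      ∀ b, (∑ x, Λ x a * V x) ≤ ∑ x, Λ x b * V x).Nonempty := by
  classical
  obtain ⟨a, -, ha⟩ := Finset.exists_min_image Finset.univ (fun a : Fin M => ∑ x, Λ x a * V x)
    ⟨0, Finset.mem_univ 0⟩
  exact ⟨a, Finset.mem_filter.2 ⟨Finset.mem_univ a, fun b => ha b (Finset.mem_univ b)⟩⟩

lemma bayesResponse_min (Λ : Fin M → Fin M → ℝ) (V : Fin M → ℝ) (b : Fin M) :
    ∑ x, Λ x (bayesResponse Λ V) * V x ≤ ∑ x, Λ x b * V x := by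
  classical
  have hne := bayes_filter_nonempty Λ V
  have hmem := Finset.min'_mem _ hne
  rw [Finset.mem_filter] at hmem
  unfold bayesResponse
  rw [dif_pos hne]
  exact hmem.2 b

lemma bayesResponse_eq_iff (Λ : Fin M → Fin M → ℝ) (V : Fin M → ℝ)
    (xh : Fin M) :
    bayesResponse Λ V = xh ↔
      ((∀ b, (∑ x, Λ x xh * V x) ≤ ∑ x, Λ x b * V x) ∧
        ∀ a, (∀ b, (∑ x, Λ x a * V x) ≤ ∑ x, Λ x b * V x) → xh ≤ a) := by
  classical
  have hne := bayes_filter_nonempty Λ V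
  unfold bayesResponse
  rw [dif_pos hne]
  constructor
  · rintro rfl
    have hmem := Finset.min'_mem _ hne
    rw [Finset.mem_filter] at hmem
    exact ⟨hmem.2, fun a ha => Finset.min'_le _ a (Finset.mem_filter.2 ⟨Finset.mem_univ a, ha⟩)⟩
  · rintro ⟨h1, h2⟩
    refine le_antisymm (Finset.min'_le _ xh (Finset.mem_filter.2 ⟨Finset.mem_univ xh, h1⟩)) ?_
    have hmem := Finset.min'_mem _ hne
    rw [Finset.mem_filter] at hmem
    exact h2 _ hmem.2

omit [NeZero M] in
lemma measurable_bayes_g (Λ : Fin M → Fin M → ℝ) (q : Fin M → ℝ) (a : Fin M) :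
    Measurable fun U : EuclideanSpace ℝ (Fin M) => ∑ x, Λ x a * (q x + U x) := by
  refine Finset.measurable_sum _ fun x _ => ?_
  exact (measurable_const.add
    ((EuclideanSpace.proj x : EuclideanSpace ℝ (Fin M) →L[ℝ] ℝ).continuous.measurable)).const_mul _

lemma measurableSet_bayes (Λ : Fin M → Fin M → ℝ) (q : Fin M → ℝ) (xh : Fin M) :
    MeasurableSet {U : EuclideanSpace ℝ (Fin M) |
      bayesResponse Λ (fun x => q x + U x) = xh} := by
  classical
  have hset : {U : EuclideanSpace ℝ (Fin M) | bayesResponse Λ (fun x => q x + U x) = xh} =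
      (⋂ b, {U : EuclideanSpace ℝ (Fin M) |
          (∑ x, Λ x xh * (q x + U x)) ≤ ∑ x, Λ x b * (q x + U x)}) ∩
      (⋂ a, {U : EuclideanSpace ℝ (Fin M) |
          (∀ b, (∑ x, Λ x a * (q x + U x)) ≤ ∑ x, Λ x b * (q x + U x)) → xh ≤ a}) := by
    ext U
    simp only [Set.mem_setOf_eq, Set.mem_inter_iff, Set.mem_iInter,
      bayesResponse_eq_iff Λ (fun x => q x + U x) xh]
  rw [hset]
  refine MeasurableSet.inter (MeasurableSet.iInter fun b =>
      measurableSet_le (measurable_bayes_g Λ q xh) (measurable_bayes_g Λ q b))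
    (MeasurableSet.iInter fun a => ?_)
  by_cases hxa : xh ≤ a
  · have : {U : EuclideanSpace ℝ (Fin M) |
        (∀ b, (∑ x, Λ x a * (q x + U x)) ≤ ∑ x, Λ x b * (q x + U x)) → xh ≤ a} = Set.univ := by
      ext U; simp [hxa]
    rw [this]; exact MeasurableSet.univ
  · have : {U : EuclideanSpace ℝ (Fin M) |
        (∀ b, (∑ x, Λ x a * (q x + U x)) ≤ ∑ x, Λ x b * (q x + U x)) → xh ≤ a} =
        (⋂ b, {U : EuclideanSpace ℝ (Fin M) |
          (∑ x, Λ x a * (q x + U x)) ≤ ∑ x, Λ x b * (q x + U x)})ᶜ := by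
      ext U; simp [hxa]
    rw [this]
    exact (MeasurableSet.iInter fun b =>
      measurableSet_le (measurable_bayes_g Λ q a) (measurable_bayes_g Λ q b)).compl

lemma mu_sum_le_one (Λ : Fin M → Fin M → ℝ) (q : Fin M → ℝ) {ε : ℝ} (hε : 0 < ε) :
    ∑ xh : Fin M, (volume {U : EuclideanSpace ℝ (Fin M) | ‖U‖ ≤ ε ∧
        bayesResponse Λ (fun x => q x + U x) = xh}).toReal
      / (volume {U : EuclideanSpace ℝ (Fin M) | ‖U‖ ≤ ε}).toReal ≤ 1 := by
  classical
  set B : Set (EuclideanSpace ℝ (Fin M)) := {U | ‖U‖ ≤ ε} with hB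
  have hBcb : B = Metric.closedBall 0 ε := by
    ext U; simp [hB, Metric.mem_closedBall, dist_zero_right]
  have hB0 : volume B ≠ 0 := by
    rw [hBcb]; exact (Metric.measure_closedBall_pos volume 0 hε).ne'
  have hBtop : volume B ≠ ⊤ := by
    rw [hBcb]; exact (measure_closedBall_lt_top).ne
  set S : Fin M → Set (EuclideanSpace ℝ (Fin M)) := fun xh =>
    {U | ‖U‖ ≤ ε ∧ bayesResponse Λ (fun x => q x + U x) = xh} with hS
  have hSsub : ∀ xh, S xh ⊆ B := fun xh U hU => hU.1
  have hSm : ∀ xh, MeasurableSet (S xh) := by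
    intro xh
    have : S xh = B ∩ {U | bayesResponse Λ (fun x => q x + U x) = xh} := rfl
    rw [this, hBcb]
    exact (Metric.isClosed_closedBall.measurableSet).inter (measurableSet_bayes Λ q xh)
  have hdisj : (↑(Finset.univ : Finset (Fin M)) : Set (Fin M)).PairwiseDisjoint S := by
    intro a _ b _ hab
    refine Set.disjoint_left.2 fun U hUa hUb => hab ?_
    exact hUa.2 ▸ hUb.2 ▸ rfl
  have hsum : ∑ xh, volume (S xh) = volume (⋃ xh ∈ Finset.univ, S xh) :=
    (measure_biUnion_finset hdisj fun i _ => hSm i).symm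
  have hle : volume (⋃ xh ∈ Finset.univ, S xh) ≤ volume B := by
    refine measure_mono ?_
    simp only [Set.iUnion_subset_iff]
    exact fun xh _ => hSsub xh
  have hSfin : ∀ xh ∈ Finset.univ, volume (S xh) ≠ ⊤ :=
    fun xh _ => ((measure_mono (hSsub xh)).trans_lt (lt_top_iff_ne_top.2 hBtop)).ne
  rw [← Finset.sum_div]
  rw [div_le_one (ENNReal.toReal_pos hB0 hBtop)]
  calc ∑ xh, (volume (S xh)).toReal = (∑ xh, volume (S xh)).toReal :=
        (ENNReal.toReal_sum hSfin).symm
    _ ≤ (volume B).toReal := by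
        rw [hsum]
        exact ENNReal.toReal_mono hBtop hle

lemma perturb_bound (Λ : Fin M → Fin M → ℝ) (q : Fin M → ℝ)
    {CΛ ε : ℝ} (hCΛ : ∀ a b, Real.sqrt (∑ x, (Λ x a - Λ x b) ^ 2) ≤ CΛ)
    (U : EuclideanSpace ℝ (Fin M)) (hU : ‖U‖ ≤ ε) (xh b : Fin M)
    (hxh : bayesResponse Λ (fun x => q x + U x) = xh) :
    ∑ x, Λ x xh * q x ≤ (∑ x, Λ x b * q x) + CΛ * ε := by
  have h := bayesResponse_min Λ (fun x => q x + U x) b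
  rw [hxh] at h
  have h2 : ∑ x, Λ x xh * q x - ∑ x, Λ x b * q x ≤ ∑ x, (Λ x b - Λ x xh) * U x := by
    have e1 : ∑ x, Λ x xh * (q x + U x) = ∑ x, Λ x xh * q x + ∑ x, Λ x xh * U x := by
      rw [← Finset.sum_add_distrib]; exact Finset.sum_congr rfl fun x _ => by ring
    have e2 : ∑ x, Λ x b * (q x + U x) = ∑ x, Λ x b * q x + ∑ x, Λ x b * U x := by
      rw [← Finset.sum_add_distrib]; exact Finset.sum_congr rfl fun x _ => by ring
    have e3 : ∑ x, (Λ x b - Λ x xh) * U x = ∑ x, Λ x b * U x - ∑ x, Λ x xh * U x := by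
      rw [← Finset.sum_sub_distrib]; exact Finset.sum_congr rfl fun x _ => by ring
    rw [e1, e2] at h
    rw [e3]
    linarith
  have hcs : ∑ x, (Λ x b - Λ x xh) * U x ≤
      Real.sqrt (∑ x, (Λ x b - Λ x xh) ^ 2) * Real.sqrt (∑ x, (U x) ^ 2) :=
    Real.sum_mul_le_sqrt_mul_sqrt _ _ _
  have hnorm : Real.sqrt (∑ x, (U x) ^ 2) = ‖U‖ := by
    rw [EuclideanSpace.norm_eq]
    congr 1
    exact Finset.sum_congr rfl fun x _ => by rw [Real.norm_eq_abs, sq_abs]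
  have hfinal : ∑ x, (Λ x b - Λ x xh) * U x ≤ CΛ * ε := by
    calc ∑ x, (Λ x b - Λ x xh) * U x ≤ Real.sqrt (∑ x, (Λ x b - Λ x xh) ^ 2) * ‖U‖ := by
          rw [← hnorm]; exact hcs
      _ ≤ CΛ * ε := by
          refine mul_le_mul (hCΛ b xh) hU (norm_nonneg U) ?_
          exact le_trans (Real.sqrt_nonneg _) (hCΛ b xh)
  linarith

omit [NeZero M] in
lemma bayes_inv_identity (Pm : Matrix (Fin M) (Fin M) ℝ) (hdet : Pm.det ≠ 0)
    (v : Fin M → ℝ) (i : Fin M) :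
    ∑ z, (∑ x, v x * Pm x z) * Pm⁻¹ z i = v i := by
  have h1 : Matrix.vecMul (Matrix.vecMul v Pm) Pm⁻¹ = v := by
    rw [Matrix.vecMul_vecMul, Matrix.mul_nonsing_inv Pm (isUnit_iff_ne_zero.2 hdet),
      Matrix.vecMul_one]
  have := congrFun h1 i
  simp only [Matrix.vecMul, dotProduct] at this
  exact this

omit [NeZero M] in
lemma bayes_l1_bound (Pm : Matrix (Fin M) (Fin M) ℝ) (hdet : Pm.det ≠ 0) (PX QX : Fin M → ℝ) :
    ∑ x, |PX x - QX x| ≤ (∑ i, Real.sqrt (∑ z, (Pm⁻¹ z i) ^ 2)) *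
      (∑ z, |(∑ x, PX x * Pm x z) - (∑ x, QX x * Pm x z)|) := by
  have key : ∀ i, PX i - QX i
      = ∑ z, ((∑ x, PX x * Pm x z) - (∑ x, QX x * Pm x z)) * Pm⁻¹ z i := by
    intro i
    have := bayes_inv_identity Pm hdet (fun x => PX x - QX x) i
    rw [← this]
    refine Finset.sum_congr rfl fun z _ => ?_
    congr 1
    rw [← Finset.sum_sub_distrib]
    exact Finset.sum_congr rfl fun x _ => by ring
  calc ∑ x, |PX x - QX x|
      ≤ ∑ i, ∑ z, |(∑ x, PX x * Pm x z) - (∑ x, QX x * Pm x z)| * |Pm⁻¹ z i| := by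
        refine Finset.sum_le_sum fun i _ => ?_
        rw [key i]
        exact (Finset.abs_sum_le_sum_abs _ _).trans (le_of_eq (Finset.sum_congr rfl
          fun z _ => abs_mul _ _))
    _ ≤ ∑ i, ∑ z, |(∑ x, PX x * Pm x z) - (∑ x, QX x * Pm x z)| *
          Real.sqrt (∑ z', (Pm⁻¹ z' i) ^ 2) := by
        refine Finset.sum_le_sum fun i _ => Finset.sum_le_sum fun z _ => ?_
        refine mul_le_mul_of_nonneg_left ?_ (abs_nonneg _)
        rw [← Real.sqrt_sq_eq_abs]
        exact Real.sqrt_le_sqrt (Finset.single_le_sum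
          (f := fun z' => (Pm⁻¹ z' i) ^ 2) (fun z' _ => sq_nonneg _) (Finset.mem_univ z))
    _ = (∑ i, Real.sqrt (∑ z, (Pm⁻¹ z i) ^ 2)) *
          (∑ z, |(∑ x, PX x * Pm x z) - (∑ x, QX x * Pm x z)|) := by
        rw [Finset.sum_mul]
        refine Finset.sum_congr rfl fun i _ => ?_
        rw [← Finset.sum_mul, mul_comm]

end Aux

theorem randomized_mismatched_filter_excess_le
    {M : ℕ} [NeZero M]
    (Pm : Matrix (Fin M) (Fin M) ℝ) (hPm0 : ∀ i j, 0 < Pm i j)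
    (hProw : ∀ i, ∑ j, Pm i j = 1) (hdet : Pm.det ≠ 0)
    (PX QX : Fin M → ℝ) (hPX0 : ∀ x, 0 ≤ PX x) (hQX0 : ∀ x, 0 < QX x)
    (hPX1 : ∑ x, PX x = 1) (hQX1 : ∑ x, QX x = 1)
    (Λ : Fin M → Fin M → ℝ) (hΛ0 : ∀ i j, 0 ≤ Λ i j)
    (Λmax : ℝ) (hΛmax : ∀ i j, Λ i j ≤ Λmax)
    (CΛ : ℝ) (hCΛ : ∀ a b, Real.sqrt (∑ x, (Λ x a - Λ x b) ^ 2) ≤ CΛ)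
    (ε : ℝ) (hε : 0 < ε)
    (μQ : Fin M → Fin M → ℝ)
    (hμQ : ∀ z xh, μQ z xh =
      (volume {U : EuclideanSpace ℝ (Fin M) | ‖U‖ ≤ ε ∧
          bayesResponse Λ (fun x => QX x * Pm x z / (∑ x', QX x' * Pm x' z) + U x)
            = xh}).toReal
      / (volume {U : EuclideanSpace ℝ (Fin M) | ‖U‖ ≤ ε}).toReal)
    (fP : Fin M → Fin M)
    (hfP : ∀ z, fP z =
      bayesResponse Λ (fun x => PX x * Pm x z / (∑ x', PX x' * Pm x' z))) :
    (∑ x, ∑ z, PX x * Pm x z * (∑ xh, Λ x xh * μQ z xh))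
      - (∑ x, ∑ z, PX x * Pm x z * Λ x (fP z))
    ≤ Λmax * (∑ i, Real.sqrt (∑ z, (Pm⁻¹ z i) ^ 2))
        * (∑ z, |(∑ x, PX x * Pm x z) - (∑ x, QX x * Pm x z)|)
      + CΛ * ε := by
  classical
  have hΛmax0 : 0 ≤ Λmax := le_trans (hΛ0 0 0) (hΛmax 0 0)
  have hCΛ0 : 0 ≤ CΛ := le_trans (Real.sqrt_nonneg _) (hCΛ 0 0)
  have hQZ : ∀ z, 0 < ∑ x', QX x' * Pm x' z := fun z =>
    Finset.sum_pos (fun x _ => mul_pos (hQX0 x) (hPm0 x z)) Finset.univ_nonempty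
  -- posterior under Q
  set q : Fin M → Fin M → ℝ := fun z x => QX x * Pm x z / (∑ x', QX x' * Pm x' z) with hq
  have hμq : ∀ z xh, μQ z xh =
      (volume {U : EuclideanSpace ℝ (Fin M) | ‖U‖ ≤ ε ∧
        bayesResponse Λ (fun x => q z x + U x) = xh}).toReal
      / (volume {U : EuclideanSpace ℝ (Fin M) | ‖U‖ ≤ ε}).toReal := hμQ
  have hq0 : ∀ z x, 0 ≤ q z x := fun z x =>
    div_nonneg (mul_nonneg (hQX0 x).le (hPm0 x z).le) (hQZ z).le
  have hμ0 : ∀ z xh, 0 ≤ μQ z xh := by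
    intro z xh; rw [hμq]; positivity
  have hμsum : ∀ z, ∑ xh, μQ z xh ≤ 1 := by
    intro z
    calc ∑ xh, μQ z xh = ∑ xh : Fin M, (volume {U : EuclideanSpace ℝ (Fin M) | ‖U‖ ≤ ε ∧
          bayesResponse Λ (fun x => q z x + U x) = xh}).toReal
        / (volume {U : EuclideanSpace ℝ (Fin M) | ‖U‖ ≤ ε}).toReal :=
          Finset.sum_congr rfl fun xh _ => hμq z xh
      _ ≤ 1 := mu_sum_le_one Λ (q z) hε
  have hsupp : ∀ z xh, μQ z xh ≠ 0 → ∃ U : EuclideanSpace ℝ (Fin M),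
      ‖U‖ ≤ ε ∧ bayesResponse Λ (fun x => q z x + U x) = xh := by
    intro z xh h
    have hv : volume {U : EuclideanSpace ℝ (Fin M) | ‖U‖ ≤ ε ∧
        bayesResponse Λ (fun x => q z x + U x) = xh} ≠ 0 := by
      intro h0
      apply h
      rw [hμq, h0]
      simp
    exact nonempty_of_measure_ne_zero hv
  -- Q-Bayes filter
  set fQ : Fin M → Fin M := fun z => bayesResponse Λ (q z) with hfQ
  have hfQmin : ∀ z b, ∑ x, Λ x (fQ z) * q z x ≤ ∑ x, Λ x b * q z x :=
    fun z b => bayesResponse_min Λ (q z) b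
  have hip0 : ∀ z (a : Fin M), 0 ≤ ∑ x, Λ x a * q z x := fun z a =>
    Finset.sum_nonneg fun x _ => mul_nonneg (hΛ0 x a) (hq0 z x)
  -- randomization bound per z
  have hB : ∀ z, ∑ xh, μQ z xh * (∑ x, Λ x xh * q z x)
      ≤ (∑ x, Λ x (fQ z) * q z x) + CΛ * ε := by
    intro z
    have hnn : 0 ≤ (∑ x, Λ x (fQ z) * q z x) + CΛ * ε :=
      add_nonneg (hip0 z (fQ z)) (mul_nonneg hCΛ0 hε.le)
    calc ∑ xh, μQ z xh * (∑ x, Λ x xh * q z x)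
        ≤ ∑ xh, μQ z xh * ((∑ x, Λ x (fQ z) * q z x) + CΛ * ε) := by
          refine Finset.sum_le_sum fun xh _ => ?_
          by_cases h : μQ z xh = 0
          · simp [h]
          · obtain ⟨U, hU, hUx⟩ := hsupp z xh h
            exact mul_le_mul_of_nonneg_left
              (perturb_bound Λ (q z) hCΛ U hU xh (fQ z) hUx) (hμ0 z xh)
      _ = (∑ xh, μQ z xh) * ((∑ x, Λ x (fQ z) * q z x) + CΛ * ε) :=
          (Finset.sum_mul _ _ _).symm
      _ ≤ 1 * ((∑ x, Λ x (fQ z) * q z x) + CΛ * ε) :=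
          mul_le_mul_of_nonneg_right (hμsum z) hnn
      _ = (∑ x, Λ x (fQ z) * q z x) + CΛ * ε := one_mul _
  -- identity: ∑ x, QX x * Pm x z * Λ x a = QZ z * ⟨λ_a, q z⟩
  have hQid : ∀ (a : Fin M) z, (∑ x, QX x * Pm x z * Λ x a)
      = (∑ x', QX x' * Pm x' z) * ∑ x, Λ x a * q z x := by
    intro a z
    rw [Finset.mul_sum]
    refine Finset.sum_congr rfl fun x _ => ?_
    have hz := (hQZ z).ne'
    simp only [hq]
    field_simp
  -- marginal QZ sums to 1
  have hQZ1 : ∑ z, ∑ x', QX x' * Pm x' z = 1 := by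
    rw [Finset.sum_comm]
    calc ∑ x, ∑ z, QX x * Pm x z = ∑ x, QX x * ∑ z, Pm x z := by
          refine Finset.sum_congr rfl fun x _ => (Finset.mul_sum _ _ _).symm
      _ = 1 := by
          rw [← hQX1]
          exact Finset.sum_congr rfl fun x _ => by rw [hProw x, mul_one]
  -- abbreviations
  set T1 : ℝ := ∑ x, ∑ z, PX x * Pm x z * (∑ xh, Λ x xh * μQ z xh) with hT1
  set T2 : ℝ := ∑ x, ∑ z, PX x * Pm x z * Λ x (fP z) with hT2
  set U1 : ℝ := ∑ x, ∑ z, QX x * Pm x z * (∑ xh, Λ x xh * μQ z xh) with hU1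
  set U2 : ℝ := ∑ x, ∑ z, QX x * Pm x z * Λ x (fP z) with hU2
  set U3 : ℝ := ∑ x, ∑ z, QX x * Pm x z * Λ x (fQ z) with hU3
  -- bound on cμ
  have hcμ0 : ∀ x z, 0 ≤ ∑ xh, Λ x xh * μQ z xh := fun x z =>
    Finset.sum_nonneg fun xh _ => mul_nonneg (hΛ0 x xh) (hμ0 z xh)
  have hcμmax : ∀ x z, ∑ xh, Λ x xh * μQ z xh ≤ Λmax := by
    intro x z
    calc ∑ xh, Λ x xh * μQ z xh ≤ ∑ xh, Λmax * μQ z xh :=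
          Finset.sum_le_sum fun xh _ =>
            mul_le_mul_of_nonneg_right (hΛmax x xh) (hμ0 z xh)
      _ = Λmax * ∑ xh, μQ z xh := (Finset.mul_sum _ _ _).symm
      _ ≤ Λmax * 1 := mul_le_mul_of_nonneg_left (hμsum z) hΛmax0
      _ = Λmax := mul_one _
  -- Bound (iii): change of measure
  have hD : T1 - U1 - (T2 - U2)
      = ∑ x, (PX x - QX x) * (∑ z, Pm x z * ((∑ xh, Λ x xh * μQ z xh) - Λ x (fP z))) := by
    rw [hT1, hU1, hT2, hU2]
    simp only [← Finset.sum_sub_distrib]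
    refine Finset.sum_congr rfl fun x _ => ?_
    rw [Finset.mul_sum]
    exact Finset.sum_congr rfl fun z _ => by ring
  have hDle : T1 - U1 - (T2 - U2) ≤ Λmax *
      ((∑ i, Real.sqrt (∑ z, (Pm⁻¹ z i) ^ 2)) *
        (∑ z, |(∑ x, PX x * Pm x z) - (∑ x, QX x * Pm x z)|)) := by
    rw [hD]
    have hw : ∀ x, |∑ z, Pm x z * ((∑ xh, Λ x xh * μQ z xh) - Λ x (fP z))| ≤ Λmax := by
      intro x
      calc |∑ z, Pm x z * ((∑ xh, Λ x xh * μQ z xh) - Λ x (fP z))|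
          ≤ ∑ z, |Pm x z * ((∑ xh, Λ x xh * μQ z xh) - Λ x (fP z))| :=
            Finset.abs_sum_le_sum_abs _ _
        _ ≤ ∑ z, Pm x z * Λmax := by
            refine Finset.sum_le_sum fun z _ => ?_
            rw [abs_mul, abs_of_pos (hPm0 x z)]
            refine mul_le_mul_of_nonneg_left ?_ (hPm0 x z).le
            rw [abs_le]
            constructor
            · have := hcμ0 x z; have := hΛmax x (fP z); linarith
            · have := hcμmax x z; have := hΛ0 x (fP z); linarith
        _ = Λmax := by rw [← Finset.sum_mul, hProw x, one_mul]
    calc ∑ x, (PX x - QX x) * (∑ z, Pm x z * ((∑ xh, Λ x xh * μQ z xh) - Λ x (fP z)))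
        ≤ ∑ x, |PX x - QX x| * Λmax := by
          refine Finset.sum_le_sum fun x _ => ?_
          calc (PX x - QX x) * (∑ z, Pm x z * ((∑ xh, Λ x xh * μQ z xh) - Λ x (fP z)))
              ≤ |(PX x - QX x) * (∑ z, Pm x z * ((∑ xh, Λ x xh * μQ z xh) - Λ x (fP z)))| :=
                le_abs_self _
            _ = |PX x - QX x| * |∑ z, Pm x z * ((∑ xh, Λ x xh * μQ z xh) - Λ x (fP z))| :=
                abs_mul _ _
            _ ≤ |PX x - QX x| * Λmax :=
                mul_le_mul_of_nonneg_left (hw x) (abs_nonneg _)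
      _ = (∑ x, |PX x - QX x|) * Λmax := (Finset.sum_mul _ _ _).symm
      _ ≤ ((∑ i, Real.sqrt (∑ z, (Pm⁻¹ z i) ^ 2)) *
            (∑ z, |(∑ x, PX x * Pm x z) - (∑ x, QX x * Pm x z)|)) * Λmax :=
          mul_le_mul_of_nonneg_right (bayes_l1_bound Pm hdet PX QX) hΛmax0
      _ = Λmax * ((∑ i, Real.sqrt (∑ z, (Pm⁻¹ z i) ^ 2)) *
            (∑ z, |(∑ x, PX x * Pm x z) - (∑ x, QX x * Pm x z)|)) := mul_comm _ _
  -- Bound (ii): U1 - U3 ≤ CΛ * ε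
  have hU1z : U1 = ∑ z, ∑ xh, μQ z xh *
      ((∑ x', QX x' * Pm x' z) * ∑ x, Λ x xh * q z x) := by
    rw [hU1, Finset.sum_comm]
    refine Finset.sum_congr rfl fun z _ => ?_
    calc ∑ x, QX x * Pm x z * (∑ xh, Λ x xh * μQ z xh)
        = ∑ x, ∑ xh, QX x * Pm x z * (Λ x xh * μQ z xh) := by
          refine Finset.sum_congr rfl fun x _ => ?_
          rw [Finset.mul_sum]
      _ = ∑ xh, ∑ x, QX x * Pm x z * (Λ x xh * μQ z xh) := Finset.sum_comm
      _ = ∑ xh, μQ z xh * ((∑ x', QX x' * Pm x' z) * ∑ x, Λ x xh * q z x) := by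
          refine Finset.sum_congr rfl fun xh _ => ?_
          rw [← hQid xh z, Finset.mul_sum]
          exact Finset.sum_congr rfl fun x _ => by ring
  have hU3z : U3 = ∑ z, (∑ x', QX x' * Pm x' z) * ∑ x, Λ x (fQ z) * q z x := by
    rw [hU3, Finset.sum_comm]
    exact Finset.sum_congr rfl fun z _ => hQid (fQ z) z
  have hU13 : U1 - U3 ≤ CΛ * ε := by
    rw [hU1z, hU3z, ← Finset.sum_sub_distrib]
    calc ∑ z, ((∑ xh, μQ z xh * ((∑ x', QX x' * Pm x' z) * ∑ x, Λ x xh * q z x))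
          - (∑ x', QX x' * Pm x' z) * ∑ x, Λ x (fQ z) * q z x)
        ≤ ∑ z, (∑ x', QX x' * Pm x' z) * (CΛ * ε) := by
          refine Finset.sum_le_sum fun z _ => ?_
          have h1 : ∑ xh, μQ z xh * ((∑ x', QX x' * Pm x' z) * ∑ x, Λ x xh * q z x)
              = (∑ x', QX x' * Pm x' z) * ∑ xh, μQ z xh * (∑ x, Λ x xh * q z x) := by
            rw [Finset.mul_sum]
            exact Finset.sum_congr rfl fun xh _ => by ring
          rw [h1, ← mul_sub]
          refine mul_le_mul_of_nonneg_left ?_ (hQZ z).le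
          have := hB z
          linarith
      _ = (∑ z, ∑ x', QX x' * Pm x' z) * (CΛ * ε) := (Finset.sum_mul _ _ _).symm
      _ = CΛ * ε := by rw [hQZ1, one_mul]
  -- Bound (i): U3 - U2 ≤ 0
  have hU32 : U3 ≤ U2 := by
    have e3 : U3 = ∑ z, ∑ x, QX x * Pm x z * Λ x (fQ z) := by
      rw [hU3]; exact Finset.sum_comm
    have e2 : U2 = ∑ z, ∑ x, QX x * Pm x z * Λ x (fP z) := by
      rw [hU2]; exact Finset.sum_comm
    rw [e3, e2]
    refine Finset.sum_le_sum fun z _ => ?_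
    rw [hQid (fQ z) z, hQid (fP z) z]
    exact mul_le_mul_of_nonneg_left (hfQmin z (fP z)) (hQZ z).le
  -- combine
  have : T1 - T2 = (T1 - U1 - (T2 - U2)) + (U1 - U3) + (U3 - U2) := by ring
  rw [this, ← mul_assoc] at *
  linarith [hDle, hU13, hU32]
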